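/- Polynomial-attention layer bound (Lemma D, lem216): let f : 𝒳^M × 𝒳^M → ℝ^{n×n} and let W_1, …, W_d ∈ ℝ^{n×n} be fixed matrices. Define g(A, B) := (W_d · f(A, B)) · (W_{d−1} · f(A, B)) ⋯ (W_1 · f(A, B)) (pointwise matrix products). Then sep(g) ≤ n^{2d−1} · sep(f)^d. -/

import Mathlib

open scoped BigOperators

/-- Separation rank of a scalar-valued function of two groups of variables. -/
noncomputable def sepRank {𝒳 : Type*} {M : ℕ}
    (y : (Fin M → 𝒳) → (Fin M → 𝒳) → ℝ) : ℕ∞ :=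
  sInf {R : ℕ∞ | ∃ r : ℕ, R = (r : ℕ∞) ∧ ∃ g g' : Fin r → (Fin M → 𝒳) → ℝ,
    ∀ A B, y A B = ∑ i, g i A * g' i B}

/-- Separation rank of a matrix-valued function: maximum over output entries. -/
noncomputable def sepRankM {𝒳 : Type*} {M n m : ℕ}
    (f : (Fin M → 𝒳) → (Fin M → 𝒳) → Matrix (Fin n) (Fin m) ℝ) : ℕ∞ :=
  ⨆ i : Fin n, ⨆ j : Fin m, sepRank (fun A B => f A B i j)

section Aux

variable {𝒳 : Type*} {M : ℕ}

/-- Auxiliary predicate: `y` has a separation decomposition of size at most `r`. -/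
def SepLE (y : (Fin M → 𝒳) → (Fin M → 𝒳) → ℝ) (r : ℕ) : Prop :=
  ∃ (ι : Type) (_ : Fintype ι), Fintype.card ι ≤ r ∧
    ∃ g g' : ι → (Fin M → 𝒳) → ℝ, ∀ A B, y A B = ∑ i, g i A * g' i B

lemma SepLE.mono {y : (Fin M → 𝒳) → (Fin M → 𝒳) → ℝ} {r s : ℕ}
    (h : SepLE y r) (hrs : r ≤ s) : SepLE y s := by
  obtain ⟨ι, inst, hc, g, g', hy⟩ := h
  exact ⟨ι, inst, hc.trans hrs, g, g', hy⟩

lemma sepRank_le_of_sepLE {y : (Fin M → 𝒳) → (Fin M → 𝒳) → ℝ} {r : ℕ}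
    (h : SepLE y r) : sepRank y ≤ (r : ℕ∞) := by
  obtain ⟨ι, inst, hc, g, g', hy⟩ := h
  have e := Fintype.equivFin ι
  have hmem : ((Fintype.card ι : ℕ∞)) ∈ {R : ℕ∞ | ∃ r : ℕ, R = (r : ℕ∞) ∧
      ∃ g g' : Fin r → (Fin M → 𝒳) → ℝ, ∀ A B, y A B = ∑ i, g i A * g' i B} := by
    refine ⟨Fintype.card ι, rfl, fun i => g (e.symm i), fun i => g' (e.symm i), ?_⟩
    intro A B
    rw [hy A B]
    exact (Equiv.sum_comp e.symm (fun i => g i A * g' i B)).symm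
  exact le_trans (sInf_le hmem) (by exact_mod_cast hc)

lemma sepLE_of_sepRank_le {y : (Fin M → 𝒳) → (Fin M → 𝒳) → ℝ} {r : ℕ}
    (h : sepRank y ≤ (r : ℕ∞)) : SepLE y r := by
  classical
  set T : Set ℕ := {r' | ∃ g g' : Fin r' → (Fin M → 𝒳) → ℝ,
    ∀ A B, y A B = ∑ i, g i A * g' i B} with hT
  have hne : T.Nonempty := by
    by_contra hne
    rw [Set.not_nonempty_iff_eq_empty] at hne
    have hS : {R : ℕ∞ | ∃ r : ℕ, R = (r : ℕ∞) ∧ ∃ g g' : Fin r → (Fin M → 𝒳) → ℝ,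
        ∀ A B, y A B = ∑ i, g i A * g' i B} = ∅ := by
      ext R
      simp only [Set.mem_setOf_eq, Set.mem_empty_iff_false, iff_false, not_exists]
      rintro r' ⟨rfl, hg⟩
      exact (Set.eq_empty_iff_forall_notMem.mp hne r') hg
    rw [sepRank, hS, sInf_empty] at h
    simp at h
  have hr0 : sInf T ∈ T := Nat.sInf_mem hne
  have hle : ((sInf T : ℕ) : ℕ∞) ≤ sepRank y := by
    apply le_sInf
    rintro R ⟨r', rfl, hg⟩
    exact_mod_cast Nat.sInf_le hg
  have hTr : sInf T ≤ r := by exact_mod_cast hle.trans h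
  obtain ⟨g, g', hy⟩ := hr0
  exact ⟨Fin (sInf T), inferInstance, by simpa using hTr, g, g', hy⟩

lemma SepLE.mul {y z : (Fin M → 𝒳) → (Fin M → 𝒳) → ℝ} {r s : ℕ}
    (hy : SepLE y r) (hz : SepLE z s) :
    SepLE (fun A B => y A B * z A B) (r * s) := by
  obtain ⟨ι, instι, hcι, g, g', hgy⟩ := hy
  obtain ⟨κ, instκ, hcκ, h, h', hhz⟩ := hz
  refine ⟨ι × κ, inferInstance, ?_, fun p A => g p.1 A * h p.2 A,
    fun p B => g' p.1 B * h' p.2 B, ?_⟩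
  · rw [Fintype.card_prod]; exact Nat.mul_le_mul hcι hcκ
  · intro A B
    show y A B * z A B = _
    rw [hgy A B, hhz A B, Finset.sum_mul_sum, Fintype.sum_prod_type]
    exact Finset.sum_congr rfl fun i _ => Finset.sum_congr rfl fun k _ => by ring

lemma SepLE.add {y z : (Fin M → 𝒳) → (Fin M → 𝒳) → ℝ} {r s : ℕ}
    (hy : SepLE y r) (hz : SepLE z s) :
    SepLE (fun A B => y A B + z A B) (r + s) := by
  obtain ⟨ι, instι, hcι, g, g', hgy⟩ := hy
  obtain ⟨κ, instκ, hcκ, h, h', hhz⟩ := hz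
  refine ⟨ι ⊕ κ, inferInstance, ?_, Sum.elim g h, Sum.elim g' h', ?_⟩
  · rw [Fintype.card_sum]; exact Nat.add_le_add hcι hcκ
  · intro A B
    show y A B + z A B = _
    rw [hgy A B, hhz A B, Fintype.sum_sum_type]
    rfl

lemma sepLE_zero : SepLE (fun (_ _ : Fin M → 𝒳) => (0 : ℝ)) 0 :=
  ⟨PEmpty, inferInstance, by simp, fun i => i.elim, fun i => i.elim, by simp⟩

lemma sepLE_const (c : ℝ) : SepLE (fun (_ _ : Fin M → 𝒳) => c) 1 :=
  ⟨PUnit, inferInstance, by simp, fun _ _ => c, fun _ _ => 1, by simp⟩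

lemma SepLE.const_mul {y : (Fin M → 𝒳) → (Fin M → 𝒳) → ℝ} {r : ℕ} (c : ℝ)
    (hy : SepLE y r) : SepLE (fun A B => c * y A B) r := by
  obtain ⟨ι, instι, hcι, g, g', hgy⟩ := hy
  refine ⟨ι, instι, hcι, fun i A => c * g i A, g', ?_⟩
  intro A B
  show c * y A B = _
  rw [hgy A B, Finset.mul_sum]
  exact Finset.sum_congr rfl fun i _ => by ring

lemma sepLE_sum {α : Type*} (t : Finset α)
    (y : α → (Fin M → 𝒳) → (Fin M → 𝒳) → ℝ) {r : ℕ}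
    (h : ∀ a ∈ t, SepLE (y a) r) :
    SepLE (fun A B => ∑ a ∈ t, y a A B) (t.card * r) := by
  classical
  induction t using Finset.cons_induction with
  | empty => simpa using sepLE_zero
  | cons a t ha ih =>
    have h1 : SepLE (y a) r := h a (Finset.mem_cons_self a t)
    have h2 := ih fun b hb => h b (Finset.mem_cons_of_mem hb)
    have := h1.add h2
    simp only [Finset.sum_cons, Finset.card_cons]
    exact this.mono (by ring_nf; omega)

/-- Entries of a product of `e+1` matrix-valued functions. -/
lemma sepLE_prod_entry {n : ℕ} {t : ℕ} :
    ∀ (e : ℕ) (F : Fin (e + 1) → (Fin M → 𝒳) → (Fin M → 𝒳) → Matrix (Fin n) (Fin n) ℝ),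
    (∀ k i j, SepLE (fun A B => F k A B i j) t) →
    ∀ i j, SepLE (fun A B => (List.ofFn fun k => F k A B).prod i j)
      (n ^ e * t ^ (e + 1)) := by
  intro e
  induction e with
  | zero =>
    intro F hF i j
    have : (fun A B => (List.ofFn fun k => F k A B).prod i j)
        = fun A B => F 0 A B i j := by
      funext A B
      simp [List.ofFn_succ]
    rw [this]
    exact (hF 0 i j).mono (by simp)
  | succ e ih =>
    intro F hF i j
    have hih := ih (fun k => F k.succ) (fun k i j => hF k.succ i j)
    have key : (fun A B => (List.ofFn fun k => F k A B).prod i j)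
        = fun A B => ∑ k : Fin n, F 0 A B i k *
            (List.ofFn fun l : Fin (e + 1) => F l.succ A B).prod k j := by
      funext A B
      rw [List.ofFn_succ, List.prod_cons, Matrix.mul_apply]
    rw [key]
    have hsum := sepLE_sum (Finset.univ : Finset (Fin n))
      (fun k A B => F 0 A B i k *
        (List.ofFn fun l : Fin (e + 1) => F l.succ A B).prod k j)
      (fun k _ => (hF 0 i k).mul (hih k j))
    refine hsum.mono ?_
    simp only [Finset.card_univ, Fintype.card_fin]
    ring_nf
    omega

end Aux

/-- polynomial-attention layer bound (Lemma D, lem216). -/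
theorem sepRank_poly_attention_layer {𝒳 : Type*} {M n : ℕ} (d : ℕ) (hd : 1 ≤ d)
    (f : (Fin M → 𝒳) → (Fin M → 𝒳) → Matrix (Fin n) (Fin n) ℝ)
    (W : Fin d → Matrix (Fin n) (Fin n) ℝ) :
    sepRankM (fun A B => (List.ofFn fun j : Fin d => W j * f A B).prod)
      ≤ (n : ℕ∞) ^ (2 * d - 1) * sepRankM f ^ d := by
  rcases eq_or_ne (sepRankM f) ⊤ with htop | hfin
  · -- infinite case: RHS is ⊤
    have hn : n ≠ 0 := by
      rintro rfl
      rw [sepRankM] at htop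
      simp at htop
    rw [htop]
    have h1 : (⊤ : ℕ∞) ^ d = ⊤ := by
      rw [ENat.top_pow (by omega : d ≠ 0)]
    rw [h1, ENat.mul_top]
    · exact le_top
    · exact pow_ne_zero _ (by exact_mod_cast hn)
  · obtain ⟨s, hs⟩ := WithTop.ne_top_iff_exists.mp hfin
    have hent : ∀ i j, SepLE (fun A B => f A B i j) s := by
      intro i j
      apply sepLE_of_sepRank_le
      exact le_trans (le_trans (le_iSup (fun j => sepRank fun A B => f A B i j) j)
        (le_iSup (fun i => ⨆ j, sepRank fun A B => f A B i j) i)) hs.ge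
    have hWf : ∀ (k : Fin d) i j, SepLE (fun A B => (W k * f A B) i j) (n * s) := by
      intro k i j
      have : (fun A B => (W k * f A B) i j)
          = fun A B => ∑ l : Fin n, W k i l * f A B l j := by
        funext A B; rw [Matrix.mul_apply]
      rw [this]
      have := sepLE_sum (Finset.univ : Finset (Fin n))
        (fun l A B => W k i l * f A B l j)
        (fun l _ => (hent l j).const_mul (W k i l))
      simpa using this
    obtain ⟨e, rfl⟩ : ∃ e, d = e + 1 := ⟨d - 1, (Nat.succ_pred_eq_of_pos hd).symm⟩
    have hprod := sepLE_prod_entry e (fun k A B => W k * f A B) hWf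
    rw [sepRankM]
    apply iSup_le; intro i
    apply iSup_le; intro j
    have h1 : sepRank (fun A B => (List.ofFn fun k : Fin (e + 1) => W k * f A B).prod i j)
        ≤ ((n ^ e * (n * s) ^ (e + 1) : ℕ) : ℕ∞) := sepRank_le_of_sepLE (hprod i j)
    refine h1.trans ?_
    rw [← hs]
    have hexp : 2 * (e + 1) - 1 = 2 * e + 1 := by omega
    rw [hexp]
    push_cast
    rw [show ((n : ℕ∞)) ^ (2 * e + 1) = (n : ℕ∞) ^ e * (n : ℕ∞) ^ (e + 1) by
      rw [← pow_add]; ring_nf]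
    rw [mul_pow, mul_assoc]
    exact le_rfl
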